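/- Assuming the Eisenbud-Green-Harris conjecture (every homogeneous ideal in $k[x_0,\ldots,x_{n-1}]$ containing a regular sequence of degrees $a_1 \le \cdots \le a_n$ has the same Hilbert function as an ideal containing $x_0^{a_1},\ldots,x_{n-1}^{a_n}$) and the Clements-Lindström consequence (any homogeneous ideal containing $(x_0^d,\ldots,x_{n-1}^d)$ has the same Hilbert series as $(x_0^d,\ldots,x_{n-1}^d) + L$ for some lex ideal $L$): if $F_1,\ldots,F_n$ is a regular sequence of degree-$d$ forms in $k[x_0,\ldots,x_n]$ and $F_{n+1},\ldots,F_{n+r}$ are degree-$d$ forms with $F_1,\ldots,F_{n+r}$ linearly independent, then $\dim_k k[x_0,\ldots,x_n]/(F_1,\ldots,F_{n+r})$ in each degree is at most the corresponding dimension for $(x_0^d,\ldots,x_{n-1}^d) + L_d$, where $L_d$ is generated by the first $r$ degree-$d$ monomials in lexicographic order excluding pure powers. -/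

import Mathlib

open MvPolynomial

attribute [local instance] MvPolynomial.gradedAlgebra

noncomputable section

/-- The Hilbert function of an ideal `I`: the `k`-dimension of the degree-`e` graded
piece of `R/I`, i.e. the quotient of the space of degree-`e` forms by those lying
in `I`. -/
def hilb (N : ℕ) (k : Type*) [Field k] (I : Ideal (MvPolynomial (Fin N) k)) (e : ℕ) :
    ℕ :=
  Module.finrank k
    ((homogeneousSubmodule (Fin N) k e) ⧸
      ((Submodule.restrictScalars k I ⊓ homogeneousSubmodule (Fin N) k e).comap
        (homogeneousSubmodule (Fin N) k e).subtype))

/-- `u` is lexicographically greater than `v` (with `x₀ > x₁ > ⋯`). -/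
def lexGt (N : ℕ) (u v : Fin N →₀ ℕ) : Prop :=
  ∃ i : Fin N, v i < u i ∧ ∀ j : Fin N, j < i → u j = v j

/-- A lex ideal: a monomial ideal whose monomials of each degree form an initial
segment of the lexicographic order. -/
def IsLexIdeal (N : ℕ) (k : Type*) [Field k] (L : Ideal (MvPolynomial (Fin N) k)) :
    Prop :=
  (∃ S : Set (Fin N →₀ ℕ), L = Ideal.span ((fun u => (monomial u (1 : k))) '' S)) ∧
  ∀ u v : Fin N →₀ ℕ, (u.sum fun _ x => x) = (v.sum fun _ x => x) →
    lexGt N u v → monomial v (1 : k) ∈ L → monomial u (1 : k) ∈ L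

set_option synthInstance.maxHeartbeats 1000000
set_option maxHeartbeats 1000000

-- auxiliary lemmas

lemma homSubFD (N : ℕ) (k : Type*) [Field k] (e : ℕ) :
    FiniteDimensional k (homogeneousSubmodule (Fin N) k e) := by
  have h := homogeneousSubmodule_eq_finsupp_supported (Fin N) k e
  haveI hfin : Finite {d : Fin N →₀ ℕ | Finsupp.degree d = e} := by
    apply Set.Finite.to_subtype
    exact (Finsupp.finite_of_degree_le e).subset (fun d hd => le_of_eq hd)
  rw [show homogeneousSubmodule (Fin N) k e
      = restrictSupport k {d : Fin N →₀ ℕ | Finsupp.degree d = e} from h]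
  exact Module.Finite.of_basis (basisRestrictSupport k _)

lemma support_degree {N : ℕ} {k : Type*} [Field k] {p : MvPolynomial (Fin N) k} {e : ℕ}
    (hp : p.IsHomogeneous e) {v : Fin N →₀ ℕ} (hv : v ∈ p.support) : Finsupp.degree v = e := by
  by_contra h
  exact (mem_support_iff.mp hv) (hp.coeff_eq_zero h)

/-- The `W` submodule of the degree-`e` piece belonging to `I`. -/
abbrev Wsub (N : ℕ) (k : Type*) [Field k] (I : Ideal (MvPolynomial (Fin N) k)) (e : ℕ) :
    Submodule k (homogeneousSubmodule (Fin N) k e) :=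
  (Submodule.restrictScalars k I ⊓ homogeneousSubmodule (Fin N) k e).comap
    (homogeneousSubmodule (Fin N) k e).subtype

lemma hilb_add (N : ℕ) (k : Type*) [Field k] (I : Ideal (MvPolynomial (Fin N) k)) (e : ℕ) :
    hilb N k I e + Module.finrank k (Wsub N k I e)
      = Module.finrank k (homogeneousSubmodule (Fin N) k e) := by
  haveI := homSubFD N k e
  exact Submodule.finrank_quotient_add_finrank _

lemma hilb_antitone {N : ℕ} {k : Type*} [Field k] {I J : Ideal (MvPolynomial (Fin N) k)}
    (h : I ≤ J) (e : ℕ) : hilb N k J e ≤ hilb N k I e := by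
  haveI := homSubFD N k e
  have h1 := hilb_add N k I e
  have h2 := hilb_add N k J e
  have h3 : Wsub N k I e ≤ Wsub N k J e := by
    intro x hx
    exact ⟨h hx.1, hx.2⟩
  have h4 := Submodule.finrank_mono h3
  omega

lemma monomial_mem_of_le {N : ℕ} {k : Type*} [Field k] {I : Ideal (MvPolynomial (Fin N) k)}
    {g v : Fin N →₀ ℕ} (hle : g ≤ v) (hg : monomial g (1 : k) ∈ I) :
    monomial v (1 : k) ∈ I := by
  have : monomial v (1 : k) = monomial (v - g) (1 : k) * monomial g (1 : k) := by
    rw [monomial_mul, one_mul, tsub_add_cancel_of_le hle]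
  rw [this]
  exact Ideal.mul_mem_left _ _ hg

lemma eq_of_le_of_degree_eq {N : ℕ} {g v : Fin N →₀ ℕ} (hle : g ≤ v)
    (h : Finsupp.degree g = Finsupp.degree v) : v = g := by
  obtain ⟨w, rfl⟩ := le_iff_exists_add.mp hle
  have : Finsupp.degree (g + w) = Finsupp.degree g + Finsupp.degree w := by
    simp [Finsupp.degree_eq_weight_one, map_add]
  have hw : Finsupp.degree w = 0 := by omega
  rw [Finsupp.degree_eq_zero_iff] at hw
  rw [hw, add_zero]

lemma mem_span_monomials {N : ℕ} {k : Type*} [Field k] {f : MvPolynomial (Fin N) k}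
    {T : Set (Fin N →₀ ℕ)} (h : ∀ v ∈ f.support, v ∈ T) :
    f ∈ Submodule.span k ((fun u => monomial u (1 : k)) '' T) := by
  have : (∑ v ∈ f.support, monomial v (coeff v f)) ∈
      Submodule.span k ((fun u => monomial u (1 : k)) '' T) := by
    apply Submodule.sum_mem
    intro v hv
    have h2 : monomial v (coeff v f) = coeff v f • monomial v (1 : k) := by
      rw [smul_monomial, smul_eq_mul, mul_one]
    rw [h2]
    exact Submodule.smul_mem _ _ (Submodule.subset_span ⟨v, h v hv, rfl⟩)
  rwa [← f.as_sum] at this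

lemma monomial_mem_of_support {N : ℕ} {k : Type*} [Field k] {f : MvPolynomial (Fin N) k}
    {G : Set (Fin N →₀ ℕ)} (hf : f ∈ Ideal.span ((fun u => monomial u (1 : k)) '' G))
    {v : Fin N →₀ ℕ} (hv : v ∈ f.support) :
    monomial v (1 : k) ∈ Ideal.span ((fun u => monomial u (1 : k)) '' G) := by
  obtain ⟨g, hgG, hgle⟩ := mem_ideal_span_monomial_image.mp hf v hv
  exact monomial_mem_of_le hgle (Ideal.subset_span ⟨g, hgG, rfl⟩)

lemma lexGt_or_lexGt {N : ℕ} {u v : Fin N →₀ ℕ} (h : u ≠ v) :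
    lexGt N u v ∨ lexGt N v u := by
  have hne : (Finset.univ.filter (fun j : Fin N => u j ≠ v j)).Nonempty := by
    by_contra hc
    rw [Finset.not_nonempty_iff_eq_empty, Finset.filter_eq_empty_iff] at hc
    exact h (Finsupp.ext fun j => not_ne_iff.mp (hc (Finset.mem_univ j)))
  set i := (Finset.univ.filter (fun j : Fin N => u j ≠ v j)).min' hne with hi
  have hiu : u i ≠ v i := by
    have := Finset.min'_mem _ hne
    rw [Finset.mem_filter] at this
    exact this.2
  have hmin : ∀ j : Fin N, j < i → u j = v j := by
    intro j hj
    by_contra hc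
    have : i ≤ j := Finset.min'_le _ _ (Finset.mem_filter.mpr ⟨Finset.mem_univ j, hc⟩)
    exact absurd hj (not_lt.mpr this)
  rcases lt_or_gt_of_ne hiu with hlt | hgt
  · exact Or.inr ⟨i, hlt, fun j hj => (hmin j hj).symm⟩
  · exact Or.inl ⟨i, hgt, hmin⟩

/-- Any degree-`d` exponent other than `single (last n) d` is lex-greater than it. -/
lemma lexGt_single_last {n d : ℕ} (hd : 1 ≤ d) {u : Fin (n + 1) →₀ ℕ}
    (hu : Finsupp.degree u = d) (hne : u ≠ Finsupp.single (Fin.last n) d) :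
    lexGt (n + 1) u (Finsupp.single (Fin.last n) d) := by
  rcases lexGt_or_lexGt hne with h | h
  · exact h
  · exfalso
    obtain ⟨i, hlt, hpre⟩ := h
    -- here u i < single (last n) d i, so i = last n
    have hilast : i = Fin.last n := by
      by_contra hc
      rw [Finsupp.single_apply, if_neg (fun he => hc he.symm)] at hlt
      omega
    subst hilast
    -- u j = 0 for j < last n
    have hzero : ∀ j : Fin (n + 1), j ≠ Fin.last n → u j = 0 := by
      intro j hj
      have hjlt : j < Fin.last n := Fin.lt_last_iff_ne_last.mpr hj
      have := hpre j hjlt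
      rw [Finsupp.single_apply, if_neg (fun he => hj he.symm)] at this
      exact this.symm
    have hsub : u.support ⊆ {Fin.last n} := by
      intro j hj
      rw [Finset.mem_singleton]
      by_contra hc
      exact (Finsupp.mem_support_iff.mp hj) (hzero j hc)
    have hle : Finsupp.degree u ≤ u (Fin.last n) := by
      calc Finsupp.degree u = ∑ j ∈ u.support, u j := rfl
        _ ≤ ∑ j ∈ {Fin.last n}, u j :=
          Finset.sum_le_sum_of_subset hsub
        _ = u (Fin.last n) := Finset.sum_singleton _ _
    rw [Finsupp.single_eq_same] at hlt
    omega

lemma finrank_W_le {N : ℕ} {k : Type*} [Field k] {I : Ideal (MvPolynomial (Fin N) k)} {e : ℕ}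
    (T : Finset (Fin N →₀ ℕ)) {G : Set (Fin N →₀ ℕ)}
    (hspan : I = Ideal.span ((fun u => monomial u (1 : k)) '' G))
    (hT : ∀ v : Fin N →₀ ℕ, Finsupp.degree v = e → monomial v (1 : k) ∈ I → v ∈ T) :
    Module.finrank k (Wsub N k I e) ≤ T.card := by
  classical
  haveI := homSubFD N k e
  have hequiv : Wsub N k I e ≃ₗ[k]
      (Submodule.restrictScalars k I ⊓ homogeneousSubmodule (Fin N) k e :
        Submodule k (MvPolynomial (Fin N) k)) :=
    Submodule.comapSubtypeEquivOfLe inf_le_right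
  rw [hequiv.finrank_eq]
  have hle : (Submodule.restrictScalars k I ⊓ homogeneousSubmodule (Fin N) k e :
      Submodule k (MvPolynomial (Fin N) k)) ≤
      Submodule.span k ((fun u => monomial u (1 : k)) '' (T : Set (Fin N →₀ ℕ))) := by
    rintro f ⟨hfI, hfH⟩
    apply mem_span_monomials
    intro v hv
    have hvd : Finsupp.degree v = e := support_degree hfH hv
    have hvm : monomial v (1 : k) ∈ I := by
      rw [hspan] at hfI ⊢
      exact monomial_mem_of_support hfI hv
    exact hT v hvd hvm
  have himg : ((fun u => monomial u (1 : k)) '' (T : Set (Fin N →₀ ℕ))) =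
      ((T.image fun u => monomial u (1 : k)) : Finset (MvPolynomial (Fin N) k)) := by
    simp [Finset.coe_image]
  rw [himg] at hle
  haveI : FiniteDimensional k
      (Submodule.span k ((T.image fun u => monomial u (1 : k)) :
        Finset (MvPolynomial (Fin N) k)) : Submodule k (MvPolynomial (Fin N) k)) :=
    FiniteDimensional.span_of_finite k (Finset.finite_toSet _)
  calc Module.finrank k (Submodule.restrictScalars k I ⊓ homogeneousSubmodule (Fin N) k e :
        Submodule k (MvPolynomial (Fin N) k))
      ≤ Module.finrank k (Submodule.span k
          ((T.image fun u => monomial u (1 : k)) : Finset (MvPolynomial (Fin N) k)) :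
          Submodule k (MvPolynomial (Fin N) k)) := Submodule.finrank_mono hle
    _ ≤ (T.image fun u => monomial u (1 : k)).card := finrank_span_finset_le_card _
    _ ≤ T.card := Finset.card_image_le

lemma finrank_W_ge {N : ℕ} {k : Type*} [Field k] {m : ℕ} {F : Fin m → MvPolynomial (Fin N) k}
    {e : ℕ} (hFdeg : ∀ i, (F i).IsHomogeneous e) (hind : LinearIndependent k F)
    {I : Ideal (MvPolynomial (Fin N) k)} (hFI : ∀ i, F i ∈ I) :
    m ≤ Module.finrank k (Wsub N k I e) := by
  haveI := homSubFD N k e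
  have hequiv : Wsub N k I e ≃ₗ[k]
      (Submodule.restrictScalars k I ⊓ homogeneousSubmodule (Fin N) k e :
        Submodule k (MvPolynomial (Fin N) k)) :=
    Submodule.comapSubtypeEquivOfLe inf_le_right
  rw [hequiv.finrank_eq]
  set Q : Submodule k (MvPolynomial (Fin N) k) :=
    Submodule.restrictScalars k I ⊓ homogeneousSubmodule (Fin N) k e with hQ
  have vQ : ∀ i, F i ∈ Q := fun i => ⟨hFI i, hFdeg i⟩
  have hvind : LinearIndependent k (fun i => (⟨F i, vQ i⟩ : Q)) :=
    LinearIndependent.of_comp Q.subtype (by exact hind)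
  haveI : FiniteDimensional k Q :=
    Submodule.finiteDimensional_of_le
      (inf_le_right : Q ≤ homogeneousSubmodule (Fin N) k e)
  have hcard := hvind.fintype_card_le_finrank
  simpa using hcard

/-- **The EGH conjecture implies the lex bound for ideals containing a regular sequence
of `d`-forms.** Assuming the Eisenbud–Green–Harris conjecture (`hEGH`) and the
Clements–Lindström consequence (`hCL`): if `F₁,…,Fₙ` is a regular sequence of degree-`d`
forms in `k[x₀,…,xₙ]` and `F_{n+1},…,F_{n+r}` are degree-`d` forms with `F₁,…,F_{n+r}`
linearly independent, then in every degree `e` the Hilbert function of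
`k[x₀,…,xₙ]/(F₁,…,F_{n+r})` is at most that of `k[x₀,…,xₙ]/((x₀^d,…,x_{n-1}^d) + L_d)`,
where `L_d` is generated by the first `r` degree-`d` monomials in lexicographic order
excluding pure powers. -/
theorem stmt_19 {k : Type*} [Field k] (n r d : ℕ) (hn : 1 ≤ n) (hd : 2 ≤ d)
    (hEGH : ∀ (s : ℕ) (hs : s ≤ n + 1) (a : Fin s → ℕ), Monotone a → (∀ i, 2 ≤ a i) →
      ∀ I : Ideal (MvPolynomial (Fin (n + 1)) k),
        I.IsHomogeneous (homogeneousSubmodule (Fin (n + 1)) k) →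
        (∃ f : Fin s → MvPolynomial (Fin (n + 1)) k,
          (∀ i, f i ∈ I) ∧ (∀ i, (f i).IsHomogeneous (a i)) ∧
          RingTheory.Sequence.IsRegular (MvPolynomial (Fin (n + 1)) k) (List.ofFn f)) →
        ∃ J : Ideal (MvPolynomial (Fin (n + 1)) k),
          J.IsHomogeneous (homogeneousSubmodule (Fin (n + 1)) k) ∧
          (∀ i : Fin s, (X (Fin.castLE hs i) : MvPolynomial (Fin (n + 1)) k) ^ a i ∈ J) ∧
          ∀ e, hilb (n + 1) k J e = hilb (n + 1) k I e)
    (hCL : ∀ I : Ideal (MvPolynomial (Fin (n + 1)) k),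
      I.IsHomogeneous (homogeneousSubmodule (Fin (n + 1)) k) →
      (∀ i : Fin n, (X i.castSucc : MvPolynomial (Fin (n + 1)) k) ^ d ∈ I) →
      ∃ L : Ideal (MvPolynomial (Fin (n + 1)) k), IsLexIdeal (n + 1) k L ∧
        ∀ e, hilb (n + 1) k
            (Ideal.span (Set.range fun i : Fin n =>
              (X i.castSucc : MvPolynomial (Fin (n + 1)) k) ^ d) ⊔ L) e =
          hilb (n + 1) k I e)
    (F : Fin (n + r) → MvPolynomial (Fin (n + 1)) k)
    (hFdeg : ∀ i, (F i).IsHomogeneous d)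
    (hreg : RingTheory.Sequence.IsRegular (MvPolynomial (Fin (n + 1)) k)
      (List.ofFn fun i : Fin n => F (Fin.castAdd r i)))
    (hind : LinearIndependent k F)
    (S : Finset (Fin (n + 1) →₀ ℕ)) (hScard : S.card = r)
    (hSdeg : ∀ u ∈ S, (u.sum fun _ x => x) = d ∧ ¬ ∃ i, u = Finsupp.single i d)
    (hSlex : ∀ u ∈ S, ∀ v : Fin (n + 1) →₀ ℕ, (v.sum fun _ x => x) = d →
      ¬ (∃ i, v = Finsupp.single i d) → v ∉ S → lexGt (n + 1) u v) :
    ∀ e, hilb (n + 1) k (Ideal.span (Set.range F)) e ≤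
      hilb (n + 1) k
        (Ideal.span ((Set.range fun i : Fin n =>
            (X i.castSucc : MvPolynomial (Fin (n + 1)) k) ^ d) ∪
          ((fun u => (monomial u (1 : k))) '' (S : Set (Fin (n + 1) →₀ ℕ))))) e := by
  classical
  have hdeg : ∀ u : Fin (n + 1) →₀ ℕ, (u.sum fun _ x => x) = Finsupp.degree u := fun _ => rfl
  have hdsingle : ∀ (i : Fin (n + 1)) (c : ℕ), Finsupp.degree (Finsupp.single i c) = c :=
    fun i c => by
      show (Finsupp.single i c).sum (fun _ x => x) = c
      exact Finsupp.sum_single_index rfl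
  set P : Ideal (MvPolynomial (Fin (n + 1)) k) :=
    Ideal.span (Set.range fun i : Fin n =>
      (X i.castSucc : MvPolynomial (Fin (n + 1)) k) ^ d) with hP
  have hs : n ≤ n + 1 := Nat.le_succ n
  obtain ⟨J, hJhom, hJpow, hJe⟩ := hEGH n hs (fun _ => d) monotone_const (fun _ => hd)
    (Ideal.span (Set.range F))
    (Ideal.homogeneous_span _ _ (by
      rintro x ⟨i, rfl⟩
      exact ⟨d, hFdeg i⟩))
    ⟨fun i : Fin n => F (Fin.castAdd r i),
      fun i => Ideal.subset_span ⟨Fin.castAdd r i, rfl⟩,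
      fun i => hFdeg _, hreg⟩
  obtain ⟨L, hLlex, hLe⟩ := hCL J hJhom (fun i => hJpow i)
  have hPL : ∀ e, hilb (n + 1) k (P ⊔ L) e = hilb (n + 1) k (Ideal.span (Set.range F)) e :=
    fun e => (hLe e).trans (hJe e)
  obtain ⟨SL, hSL⟩ := hLlex.1
  set PE : Set (Fin (n + 1) →₀ ℕ) :=
    Set.range fun i : Fin n => Finsupp.single (i.castSucc : Fin (n + 1)) d with hPE
  have hPspan : P = Ideal.span ((fun u => monomial u (1 : k)) '' PE) := by
    rw [hP, hPE,
      show (fun i : Fin n => (X i.castSucc : MvPolynomial (Fin (n + 1)) k) ^ d)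
        = ((fun u => monomial u (1 : k)) ∘
            fun i : Fin n => Finsupp.single (i.castSucc : Fin (n + 1)) d)
        from funext fun i => X_pow_eq_monomial,
      Set.range_comp]
  have hPLspan : P ⊔ L = Ideal.span ((fun u => monomial u (1 : k)) '' (PE ∪ SL)) := by
    rw [Set.image_union, Ideal.span_union, hPspan, hSL]
  -- The key claim
  have key : ∀ u ∈ S, monomial u (1 : k) ∈ P ⊔ L := by
    intro u0 hu0
    by_contra h0
    have hu0d : Finsupp.degree u0 = d := by rw [← hdeg]; exact (hSdeg u0 hu0).1
    have hu0np : ¬ ∃ i, u0 = Finsupp.single i d := (hSdeg u0 hu0).2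
    have hu0L : monomial u0 (1 : k) ∉ L := fun h => h0 (Submodule.mem_sup_right h)
    set T : Finset (Fin (n + 1) →₀ ℕ) :=
      (Finset.univ.image fun i : Fin n => Finsupp.single (i.castSucc : Fin (n + 1)) d)
        ∪ S.erase u0 with hT
    have hTmem : ∀ v : Fin (n + 1) →₀ ℕ, Finsupp.degree v = d →
        monomial v (1 : k) ∈ P ⊔ L → v ∈ T := by
      intro v hvd hvmem
      have hvmem' := hvmem
      rw [hPLspan, mem_ideal_span_monomial_image] at hvmem'
      have hsupp : v ∈ (monomial v (1 : k)).support := by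
        rw [support_monomial, if_neg one_ne_zero]
        exact Finset.mem_singleton_self v
      obtain ⟨g, hgG, hgle⟩ := hvmem' v hsupp
      rcases hgG with hgPE | hgSL
      · obtain ⟨i, rfl⟩ := hgPE
        have hveq : v = Finsupp.single (i.castSucc : Fin (n + 1)) d :=
          eq_of_le_of_degree_eq hgle (by rw [hvd, hdsingle])
        rw [hveq]
        exact Finset.mem_union_left _
          (Finset.mem_image.mpr ⟨i, Finset.mem_univ i, rfl⟩)
      · have hvL : monomial v (1 : k) ∈ L := by
          rw [hSL]
          exact monomial_mem_of_le hgle (Ideal.subset_span ⟨g, hgSL, rfl⟩)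
        have hvne : v ≠ u0 := by
          rintro rfl
          exact hu0L hvL
        by_cases hpure : ∃ i, v = Finsupp.single i d
        · obtain ⟨i, rfl⟩ := hpure
          by_cases hi : i = Fin.last n
          · exfalso
            subst hi
            have hlex : lexGt (n + 1) u0 (Finsupp.single (Fin.last n) d) :=
              lexGt_single_last (by omega) hu0d (fun he => hu0np ⟨Fin.last n, he⟩)
            exact hu0L (hLlex.2 u0 _
              (by rw [hdeg, hdeg, hu0d, hdsingle]) hlex hvL)
          · obtain ⟨j, rfl⟩ := Fin.exists_castSucc_eq.mpr hi
            exact Finset.mem_union_left _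
              (Finset.mem_image.mpr ⟨j, Finset.mem_univ j, rfl⟩)
        · by_cases hvS : v ∈ S
          · exact Finset.mem_union_right _ (Finset.mem_erase.mpr ⟨hvne, hvS⟩)
          · exfalso
            have hlex := hSlex u0 hu0 v (by rw [hdeg, hvd]) hpure hvS
            exact hu0L (hLlex.2 u0 v
              (by rw [hdeg, hdeg, hu0d, hvd]) hlex hvL)
    have hr1 : 1 ≤ r := by
      rw [← hScard]
      exact Finset.card_pos.mpr ⟨u0, hu0⟩
    have hTcard : T.card ≤ n + (r - 1) := by
      have h0' := Finset.card_union_le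
        (Finset.univ.image fun i : Fin n => Finsupp.single (i.castSucc : Fin (n + 1)) d)
        (S.erase u0)
      have h1 : (Finset.univ.image
          fun i : Fin n => Finsupp.single (i.castSucc : Fin (n + 1)) d).card ≤ n :=
        le_trans Finset.card_image_le (by simp)
      have h2 : (S.erase u0).card = r - 1 := by
        rw [Finset.card_erase_of_mem hu0, hScard]
      rw [hT]
      omega
    have hWle : Module.finrank k (Wsub (n + 1) k (P ⊔ L) d) ≤ T.card :=
      finrank_W_le T hPLspan hTmem
    haveI := homSubFD (n + 1) k d
    have hFrank : n + r ≤
        Module.finrank k (Wsub (n + 1) k (Ideal.span (Set.range F)) d) :=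
      finrank_W_ge hFdeg hind (fun i => Ideal.subset_span ⟨i, rfl⟩)
    have hrank_eq : Module.finrank k (Wsub (n + 1) k (P ⊔ L) d) =
        Module.finrank k (Wsub (n + 1) k (Ideal.span (Set.range F)) d) := by
      have h1 := hilb_add (n + 1) k (P ⊔ L) d
      have h2 := hilb_add (n + 1) k (Ideal.span (Set.range F)) d
      have h3 := hPL d
      omega
    omega
  -- conclude
  have hsub : Ideal.span ((Set.range fun i : Fin n =>
      (X i.castSucc : MvPolynomial (Fin (n + 1)) k) ^ d) ∪
      ((fun u => (monomial u (1 : k))) '' (S : Set (Fin (n + 1) →₀ ℕ)))) ≤ P ⊔ L := by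
    rw [Ideal.span_union]
    apply sup_le
    · exact le_sup_left
    · rw [Ideal.span_le]
      rintro x ⟨u, huS, rfl⟩
      exact key u huS
  intro e
  calc hilb (n + 1) k (Ideal.span (Set.range F)) e
      = hilb (n + 1) k (P ⊔ L) e := (hPL e).symm
    _ ≤ _ := hilb_antitone hsub e

end
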